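/- Let e be a primitive integral future-pointing null vector and let g ∈ O⁺(ℤ). If g maps the horoball U_e = {x ∈ C⁺ : B(x,e) ≤ (1/2)·√(B(x,x))} into itself (i.e., g(x) ∈ U_e for every x ∈ U_e), then g(e) = e. -/

import Mathlib

/-- The Minkowski bilinear form of signature `(1,n)` on `ℝ^{n+1}`:
`B x y = x₀ y₀ - ∑_{i=1}^n xᵢ yᵢ`. -/
def B (n : ℕ) (x y : Fin (n + 1) → ℝ) : ℝ :=
  x 0 * y 0 - ∑ i : Fin n, x i.succ * y i.succ

/-- The integral vector `z ∈ ℤ^{n+1}` viewed inside `V = ℝ^{n+1}`. -/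
def toReal (n : ℕ) (z : Fin (n + 1) → ℤ) : Fin (n + 1) → ℝ := fun i => (z i : ℝ)

/-- The integral lattice `ℤ^{n+1} ⊆ ℝ^{n+1}`. -/
def intLattice (n : ℕ) : Set (Fin (n + 1) → ℝ) := {x | ∀ i, ∃ m : ℤ, x i = (m : ℝ)}

/-- The open positive cone `C⁺ = {x : B(x,x) > 0, x₀ > 0}`. -/
def posCone (n : ℕ) : Set (Fin (n + 1) → ℝ) := {x | 0 < B n x x ∧ 0 < x 0}

/-- Membership in `O⁺(ℤ)`: a linear automorphism of `V` preserving the Minkowski form,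
mapping the lattice `ℤ^{n+1}` onto itself and the open positive cone onto itself. -/
def InOplusZ (n : ℕ) (g : (Fin (n + 1) → ℝ) ≃ₗ[ℝ] (Fin (n + 1) → ℝ)) : Prop :=
  (∀ x y, B n (g x) (g y) = B n x y) ∧
  g '' intLattice n = intLattice n ∧
  g '' posCone n = posCone n

/-- The horoball `U_e = {x ∈ C⁺ : B(x,e) ≤ (1/2)√(B(x,x))}` at a null vector `e`. -/
def horoball (n : ℕ) (e : Fin (n + 1) → ℝ) : Set (Fin (n + 1) → ℝ) :=
  {x ∈ posCone n | B n x e ≤ (1 / 2) * Real.sqrt (B n x x)}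

namespace CuspAux

variable {n : ℕ}

lemma B_comm (x y : Fin (n + 1) → ℝ) : B n x y = B n y x := by
  simp [B, mul_comm]

lemma B_add_left (x y w : Fin (n + 1) → ℝ) : B n (x + y) w = B n x w + B n y w := by
  simp only [B, Pi.add_apply, add_mul, Finset.sum_add_distrib]
  ring

lemma B_smul_left (a : ℝ) (x w : Fin (n + 1) → ℝ) : B n (a • x) w = a * B n x w := by
  simp only [B, Pi.smul_apply, smul_eq_mul, mul_sub, Finset.mul_sum]
  congr 1
  · ring
  · exact Finset.sum_congr rfl fun i _ => by ring

lemma B_add_right (w x y : Fin (n + 1) → ℝ) : B n w (x + y) = B n w x + B n w y := by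
  rw [B_comm, B_add_left, B_comm x w, B_comm y w]

lemma B_smul_right (a : ℝ) (w x : Fin (n + 1) → ℝ) : B n w (a • x) = a * B n w x := by
  rw [B_comm, B_smul_left, B_comm x w]

end CuspAux

open CuspAux in
set_option maxHeartbeats 1000000 in
/-- If `g ∈ O⁺(ℤ)` maps the horoball `U_e` of a primitive integral future-pointing null
vector `e` into itself, then `g(e) = e`. -/
theorem fixes_cusp_of_maps_horoball (n : ℕ) (hn : 1 ≤ n) (z : Fin (n + 1) → ℤ)
    (hprim : Finset.univ.gcd z = 1)
    (hnull : B n (toReal n z) (toReal n z) = 0)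
    (hfut : 0 < z 0)
    (g : (Fin (n + 1) → ℝ) ≃ₗ[ℝ] (Fin (n + 1) → ℝ)) (hg : InOplusZ n g)
    (hmaps : ∀ x ∈ horoball n (toReal n z), g x ∈ horoball n (toReal n z)) :
    g (toReal n z) = toReal n z := by
  obtain ⟨hB, hL, hC⟩ := hg
  set e : Fin (n + 1) → ℝ := toReal n z with he_def
  set f : Fin (n + 1) → ℝ := g e with hf_def
  have he0 : (0 : ℝ) < e 0 := by
    show (0:ℝ) < (z 0 : ℝ)
    exact_mod_cast hfut
  have heL : e ∈ intLattice n := fun i => ⟨z i, rfl⟩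
  -- forward and backward cone preservation
  have cone_fwd : ∀ x ∈ posCone n, g x ∈ posCone n := by
    intro x hx
    have := Set.mem_image_of_mem g hx
    rwa [hC] at this
  have cone_bwd : ∀ x, g x ∈ posCone n → x ∈ posCone n := by
    intro x hx
    rw [← hC] at hx
    obtain ⟨u, hu, hgu⟩ := hx
    rwa [g.injective hgu] at hu
  -- f is null
  have hBff : B n f f = 0 := by rw [hf_def, hB]; exact hnull
  -- f is integral
  have hfL : f ∈ intLattice n := by
    have := Set.mem_image_of_mem g heL
    rwa [hL] at this
  choose w hw using hfL
  -- f 0 ≥ 0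
  have hf0_nonneg : 0 ≤ f 0 := by
    set δ : Fin (n + 1) → ℝ := fun j => if j = 0 then 1 else 0 with hδ
    have hδ0 : δ 0 = 1 := rfl
    have hBeδ : B n e δ = e 0 := by
      simp [B, hδ, Fin.succ_ne_zero]
    have hBδδ : B n δ δ = 1 := by
      simp [B, hδ, Fin.succ_ne_zero]
    have key : ∀ ε : ℝ, 0 < ε → 0 < f 0 + ε * (g δ) 0 := by
      intro ε hε
      have hx : e + ε • δ ∈ posCone n := by
        constructor
        · rw [B_add_left, B_add_right, B_add_right, B_smul_left, B_smul_right,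
            B_smul_right, B_smul_left]
          rw [hnull, B_comm δ e, hBeδ, hBδδ]
          nlinarith
        · show 0 < e 0 + ε * δ 0
          rw [hδ0]; linarith
      have := (cone_fwd _ hx).2
      rw [map_add, map_smul] at this
      simpa using this
    by_contra hneg
    push_neg at hneg
    set d : ℝ := (g δ) 0 with hd
    have h1 := key 1 one_pos
    have hdpos : 0 < d := by nlinarith
    have hε : 0 < -f 0 / (2 * d) := div_pos (by linarith) (by linarith)
    have h2 := key _ hε
    have heq : -f 0 / (2 * d) * d = -f 0 / 2 := by
      field_simp
    rw [heq] at h2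
    linarith
  -- f 0 > 0
  have hf0 : 0 < f 0 := by
    rcases lt_or_eq_of_le hf0_nonneg with h | h
    · exact h
    -- f 0 = 0 forces f = 0, impossible
    exfalso
    have hsum : ∑ i : Fin n, f i.succ * f i.succ = 0 := by
      have : f 0 * f 0 - ∑ i : Fin n, f i.succ * f i.succ = 0 := hBff
      nlinarith
    have hzero : ∀ i : Fin n, f i.succ = 0 := by
      intro i
      have h0 := (Finset.sum_eq_zero_iff_of_nonneg
        (fun j _ => mul_self_nonneg (f j.succ))).1 hsum i (Finset.mem_univ i)
      exact mul_self_eq_zero.mp h0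
    have hf_eq : f = 0 := by
      funext i
      induction i using Fin.cases with
      | zero => exact h.symm
      | succ j => exact hzero j
    have he_eq : e = 0 := by
      have : g e = g 0 := by rw [← hf_def, hf_eq, map_zero]
      exact g.injective this
    rw [he_eq] at he0
    simp at he0
  -- sum of squares identity
  have hS : (∑ i : Fin n, (f 0 * e i.succ - e 0 * f i.succ) ^ 2)
      = f 0 * f 0 * (∑ i : Fin n, e i.succ * e i.succ)
        + e 0 * e 0 * (∑ i : Fin n, f i.succ * f i.succ)
        - 2 * (e 0 * f 0) * (∑ i : Fin n, e i.succ * f i.succ) := by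
    rw [Finset.mul_sum, Finset.mul_sum, Finset.mul_sum, ← Finset.sum_add_distrib,
      ← Finset.sum_sub_distrib]
    exact Finset.sum_congr rfl fun i _ => by ring
  have hA : ∑ i : Fin n, e i.succ * e i.succ = e 0 * e 0 := by
    have : e 0 * e 0 - ∑ i : Fin n, e i.succ * e i.succ = 0 := hnull
    linarith
  have hCf : ∑ i : Fin n, f i.succ * f i.succ = f 0 * f 0 := by
    have : f 0 * f 0 - ∑ i : Fin n, f i.succ * f i.succ = 0 := hBff
    linarith
  set c : ℝ := B n e f with hc_def
  have hD : ∑ i : Fin n, e i.succ * f i.succ = e 0 * f 0 - c := by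
    have : c = e 0 * f 0 - ∑ i : Fin n, e i.succ * f i.succ := rfl
    linarith
  have hS' : (∑ i : Fin n, (f 0 * e i.succ - e 0 * f i.succ) ^ 2)
      = 2 * (e 0 * f 0) * c := by
    rw [hS, hA, hCf, hD]; ring
  have hSnn : 0 ≤ ∑ i : Fin n, (f 0 * e i.succ - e 0 * f i.succ) ^ 2 :=
    Finset.sum_nonneg fun i _ => sq_nonneg _
  have hc_nonneg : 0 ≤ c := by nlinarith [hS', hSnn, mul_pos he0 hf0]
  rcases eq_or_lt_of_le hc_nonneg with h0 | hcpos
  · -- c = 0 : f is proportional to e, and primitivity gives f = e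
    have hterm : ∀ i : Fin n, f 0 * e i.succ = e 0 * f i.succ := by
      intro i
      have h0' := (Finset.sum_eq_zero_iff_of_nonneg
        (fun j _ => sq_nonneg (f 0 * e j.succ - e 0 * f j.succ))).1
        (by rw [hS', ← h0]; ring) i (Finset.mem_univ i)
      have := sq_eq_zero_iff.mp h0'
      linarith [sub_eq_zero.mp this]
    have hprop : ∀ i : Fin (n + 1), f 0 * e i = e 0 * f i := by
      intro i
      induction i using Fin.cases with
      | zero => ring
      | succ j => exact hterm j
    -- pass to integers
    have hint : ∀ i : Fin (n + 1), w 0 * z i = z 0 * w i := by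
      intro i
      have := hprop i
      rw [hw 0, hw i] at this
      have hz : e i = (z i : ℝ) := rfl
      have hz0 : e 0 = (z 0 : ℝ) := rfl
      rw [hz, hz0] at this
      exact_mod_cast this
    have hw0pos : 0 < w 0 := by
      have : (0:ℝ) < (w 0 : ℝ) := by rw [← hw 0]; exact hf0
      exact_mod_cast this
    have hdvd : z 0 ∣ w 0 := by
      have h2 : z 0 ∣ Finset.univ.gcd (fun i => w 0 * z i) :=
        Finset.dvd_gcd fun i _ => ⟨w i, (hint i)⟩
      rw [Finset.gcd_mul_left, hprim, mul_one,
        Int.normalize_of_nonneg (le_of_lt hw0pos)] at h2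
      exact h2
    obtain ⟨k, hk⟩ := hdvd
    have hkpos : 0 < k := by
      by_contra hk'
      push_neg at hk'
      nlinarith [hk ▸ hw0pos]
    have hkR : ((k:ℝ)) ≠ 0 := by
      have : (0:ℝ) < (k:ℝ) := by exact_mod_cast hkpos
      linarith
    have hfe : f = (k : ℝ) • e := by
      funext i
      have h1 := hprop i
      have he00 : e 0 = ((z 0 : ℤ) : ℝ) := rfl
      have hf0k : f 0 = (k:ℝ) * e 0 := by
        rw [hw 0, hk, he00]
        push_cast
        ring
      rw [hf0k] at h1
      have := mul_left_cancel₀ (ne_of_gt he0) (by linarith [h1] : e 0 * f i = e 0 * ((k:ℝ) * e i))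
      simpa [Pi.smul_apply, smul_eq_mul] using this
    -- g.symm e = k⁻¹ • e is integral, so k ∣ every z i
    have hsymm : g.symm e = (k:ℝ)⁻¹ • e := by
      have hg1 : g ((k:ℝ)⁻¹ • e) = e := by
        rw [map_smul, ← hf_def, hfe, smul_smul, inv_mul_cancel₀ hkR, one_smul]
      calc g.symm e = g.symm (g ((k:ℝ)⁻¹ • e)) := by rw [hg1]
        _ = (k:ℝ)⁻¹ • e := g.symm_apply_apply _
    have hsymmL : g.symm e ∈ intLattice n := by
      have : e ∈ ⇑g '' intLattice n := by rw [hL]; exact heL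
      obtain ⟨u, hu, hgu⟩ := this
      have : u = g.symm e := by rw [← hgu, g.symm_apply_apply]
      rwa [this] at hu
    have hkdvd : ∀ i, k ∣ z i := by
      intro i
      obtain ⟨m, hm⟩ := hsymmL i
      rw [hsymm] at hm
      have hm' : (k:ℝ)⁻¹ * (z i : ℝ) = (m:ℝ) := hm
      have : (z i : ℝ) = (k:ℝ) * (m:ℝ) := by
        field_simp at hm'
        linarith [hm']
      exact ⟨m, by exact_mod_cast this⟩
    have hk1 : k = 1 := by
      have : k ∣ Finset.univ.gcd z := Finset.dvd_gcd fun i _ => hkdvd i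
      rw [hprim] at this
      rcases Int.isUnit_iff.mp (isUnit_of_dvd_one this) with h | h
      · exact h
      · omega
    show f = e
    rw [hfe, hk1, Int.cast_one, one_smul]
  · -- c > 0 : contradiction with the horoball hypothesis
    exfalso
    set t : ℝ := 2 * c + 1 / c with ht_def
    have htpos : 0 < t := by positivity
    have htc : t * c = 2 * c * c + 1 := by
      rw [ht_def]
      field_simp
    set y : Fin (n + 1) → ℝ := t • f + e with hy_def
    have hyy : B n y y = 2 * (t * c) := by
      rw [hy_def, B_add_left, B_add_right, B_add_right, B_smul_left, B_smul_right,
        B_smul_right, B_smul_left, hBff, hnull, B_comm f e]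
      ring
    have hyf : B n y f = c := by
      rw [hy_def, B_add_left, B_smul_left, hBff, ← hc_def]
      ring
    have hye : B n y e = t * c := by
      rw [hy_def, B_add_left, B_smul_left, hnull, B_comm f e, ← hc_def]
      ring
    have hycone : y ∈ posCone n := by
      constructor
      · rw [hyy]; nlinarith
      · show 0 < (t • f + e) 0
        have : (t • f + e) 0 = t * f 0 + e 0 := rfl
        rw [this]
        nlinarith
    set x : Fin (n + 1) → ℝ := g.symm y with hx_def
    have hgx : g x = y := g.apply_symm_apply y
    have hxcone : x ∈ posCone n := cone_bwd x (by rw [hgx]; exact hycone)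
    have hxx : B n x x = B n y y := by rw [← hB x x, hgx]
    have hxe : B n x e = c := by
      have := hB x e
      rw [hgx, ← hf_def, hyf] at this
      exact this.symm
    have hsqrt_lb : c ≤ 1 / 2 * Real.sqrt (2 * (t * c)) := by
      have h1 : (2 * c) ^ 2 ≤ 2 * (t * c) := by nlinarith
      have h2 : 2 * c ≤ Real.sqrt (2 * (t * c)) := by
        rw [← Real.sqrt_sq (by linarith : (0:ℝ) ≤ 2 * c)]
        exact Real.sqrt_le_sqrt h1
      linarith
    have hx_horo : x ∈ horoball n e := by
      refine ⟨hxcone, ?_⟩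
      rw [hxe, hxx, hyy]
      exact hsqrt_lb
    have hy_horo := hmaps x hx_horo
    rw [hgx] at hy_horo
    have hle : t * c ≤ 1 / 2 * Real.sqrt (2 * (t * c)) := by
      have := hy_horo.2
      rwa [hye, hyy] at this
    rw [htc] at hle
    have hlt : Real.sqrt (2 * (2 * c * c + 1)) < 2 * (2 * c * c + 1) := by
      rw [Real.sqrt_lt' (by nlinarith)]
      nlinarith [sq_nonneg c, sq_nonneg (c*c), mul_pos hcpos hcpos]
    linarith
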